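/- Fix Λ > 0, η > 0, integers M ≥ N ≥ 1, real numbers x_1, …, x_M, and set z_k := x_k + i·η. Let φ_1, …, φ_N : ℝ → ℂ be integrable on (0,Λ) and define φ̂_j(z) := ∫₀^Λ φ_j(s)·exp(i·z·s) ds. Let T be the M×N matrix with entries T_{kj} = −i·z_k·φ̂_j(z_k). Suppose there exist an index j⋆ and s⋆ ∈ (0,Λ] such that φ_{j⋆}(s) = 0 for s ∈ [0,s⋆] and φ_{j⋆}(s) = ∫_{s⋆}^s g(u) du for all s ∈ [s⋆,Λ], where g is integrable on (s⋆,Λ). Then σ_min(T) ≤ √M·exp(−η·s⋆)·(|φ_{j⋆}(s⋆)| + |φ_{j⋆}(Λ)| + ∫_{s⋆}^Λ |g(s)| ds), where σ_min(T) := inf over unit vectors θ ∈ ℂ^N of ‖T·θ‖₂. -/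

import Mathlib

open scoped Matrix
open MeasureTheory

section Helpers
open MeasureTheory Set

lemma fubini_ibp (sstar Λ : ℝ) (hle : sstar ≤ Λ) (w : ℂ) (him : 0 ≤ w.im)
    (g₁ : ℝ → ℂ) (hmeas : Measurable g₁)
    (hint : IntegrableOn g₁ (Set.Ioc sstar Λ)) :
    ∫ s in Set.Ioc sstar Λ, (∫ u in sstar..s, g₁ u) * Complex.exp (Complex.I * w * s)
      = ∫ u in Set.Ioc sstar Λ, g₁ u * ∫ s in u..Λ, Complex.exp (Complex.I * w * s) := by
  set A := Set.Ioc sstar Λ with hA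
  set μ := volume.restrict A with hμ
  set E : ℝ → ℂ := fun s => Complex.exp (Complex.I * w * s) with hE
  have hEnorm : ∀ s : ℝ, ‖E s‖ = Real.exp (-w.im * s) := by
    intro s
    have h1 : (Complex.I * w * (s : ℂ)).re = -w.im * s := by
      simp [Complex.mul_re, Complex.mul_im]
    simp only [hE, Complex.norm_exp, h1]
  have hAmeas : MeasurableSet A := measurableSet_Ioc
  set f : ℝ × ℝ → ℂ :=
    fun p => Set.indicator {q : ℝ × ℝ | q.2 ≤ q.1} (fun q => g₁ q.2 * E q.1) p with hf
  have hfmeas : Measurable f := by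
    apply Measurable.indicator
    · have hE1 : Measurable fun q : ℝ × ℝ => E q.1 :=
        Complex.measurable_exp.comp ((Complex.measurable_ofReal.comp measurable_fst).const_mul _)
      exact (hmeas.comp measurable_snd).mul hE1
    · exact measurableSet_le measurable_snd measurable_fst
  have hprod : μ.prod μ = (volume.prod volume).restrict (A ×ˢ A) := by
    rw [hμ, Measure.prod_restrict]
  have hfi : Integrable f (μ.prod μ) := by
    apply Integrable.mono'
      (g := fun p : ℝ × ℝ => Real.exp (-w.im * sstar) * ‖g₁ p.2‖)
    · exact Integrable.mul_prod (integrable_const (μ := μ) _) hint.norm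
    · exact hfmeas.aestronglyMeasurable
    · rw [hprod]
      filter_upwards [ae_restrict_mem (hAmeas.prod hAmeas)] with p hp
      calc ‖f p‖ ≤ ‖g₁ p.2 * E p.1‖ := norm_indicator_le_norm_self _ _
        _ = ‖E p.1‖ * ‖g₁ p.2‖ := by rw [norm_mul, mul_comm]
        _ ≤ Real.exp (-w.im * sstar) * ‖g₁ p.2‖ := by
            apply mul_le_mul_of_nonneg_right _ (norm_nonneg _)
            rw [hEnorm]
            apply Real.exp_le_exp.mpr
            have : sstar ≤ p.1 := le_of_lt hp.1.1
            nlinarith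
  have swap := MeasureTheory.integral_integral_swap (f := fun s u => f (s, u)) hfi
  have hLHS : (∫ s, (∫ u, f (s, u) ∂μ) ∂μ)
      = ∫ s in A, (∫ u in sstar..s, g₁ u) * E s := by
    apply setIntegral_congr_fun hAmeas
    intro s hs
    show (∫ u, f (s, u) ∂μ) = (∫ u in sstar..s, g₁ u) * E s
    have : (fun u => f (s, u)) = (Set.Iic s).indicator (fun u => g₁ u * E s) := by
      funext u
      by_cases h : u ≤ s <;> simp [hf, Set.indicator_apply, h]
    rw [this, integral_indicator measurableSet_Iic, hμ,
      Measure.restrict_restrict measurableSet_Iic]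
    have hset : Set.Iic s ∩ A = Set.Ioc sstar s := by
      ext u
      simp only [Set.mem_inter_iff, Set.mem_Iic, hA, Set.mem_Ioc]
      constructor
      · rintro ⟨h1, h2, h3⟩; exact ⟨h2, h1⟩
      · rintro ⟨h1, h2⟩; exact ⟨h2, h1, h2.trans hs.2⟩
    rw [hset, intervalIntegral.integral_of_le (le_of_lt hs.1), ← integral_mul_const]
  have hRHS : (∫ u, (∫ s, f (s, u) ∂μ) ∂μ)
      = ∫ u in A, g₁ u * ∫ s in u..Λ, E s := by
    apply setIntegral_congr_fun hAmeas
    intro u hu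
    show (∫ s, f (s, u) ∂μ) = g₁ u * ∫ s in u..Λ, E s
    have : (fun s => f (s, u)) = (Set.Ici u).indicator (fun s => g₁ u * E s) := by
      funext s
      by_cases h : u ≤ s <;> simp [hf, Set.indicator_apply, h]
    rw [this, integral_indicator measurableSet_Ici, hμ,
      Measure.restrict_restrict measurableSet_Ici]
    have hset : Set.Ici u ∩ A = Set.Icc u Λ := by
      ext s
      simp only [Set.mem_inter_iff, Set.mem_Ici, hA, Set.mem_Ioc, Set.mem_Icc]
      constructor
      · rintro ⟨h1, h2, h3⟩; exact ⟨h1, h3⟩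
      · rintro ⟨h1, h2⟩; exact ⟨h1, hu.1.trans_le h1, h2⟩
    rw [hset, ← Measure.restrict_congr_set Ioc_ae_eq_Icc,
      intervalIntegral.integral_of_le hu.2, ← integral_const_mul]
  rw [← hLHS, ← hRHS] at *
  exact swap

lemma entry_bound (Λ η sstar : ℝ) (hη : 0 < η) (hsstar0 : 0 < sstar) (hsstarΛ : sstar ≤ Λ)
    (w : ℂ) (hwim : w.im = η)
    (f : ℝ → ℂ) (hfint : IntervalIntegrable f volume 0 Λ)
    (g : ℝ → ℂ) (hg : IntervalIntegrable g volume sstar Λ)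
    (hf0 : ∀ s ∈ Set.Icc (0:ℝ) sstar, f s = 0)
    (hfg : ∀ s ∈ Set.Icc sstar Λ, f s = ∫ u in sstar..s, g u) :
    ‖-Complex.I * w * ∫ s in (0:ℝ)..Λ, f s * Complex.exp (Complex.I * w * s)‖
      ≤ Real.exp (-η * sstar) * (‖f Λ‖ + ∫ s in sstar..Λ, ‖g s‖) := by
  set E : ℝ → ℂ := fun s => Complex.exp (Complex.I * w * s) with hE
  have hiw : Complex.I * w ≠ 0 := by
    intro h
    have : (Complex.I * w).re = 0 := by rw [h]; simp
    simp [Complex.mul_re, hwim] at this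
    linarith
  have hEnorm : ∀ s : ℝ, ‖E s‖ = Real.exp (-η * s) := by
    intro s
    have h1 : (Complex.I * w * (s : ℂ)).re = -η * s := by
      simp [Complex.mul_re, Complex.mul_im, hwim]
    simp only [hE, Complex.norm_exp, h1]
  have hEcont : Continuous E := by
    exact Complex.continuous_exp.comp ((continuous_const.mul Complex.continuous_ofReal))
  -- measurable representative of g
  have hgi : IntegrableOn g (Set.Ioc sstar Λ) := hg.1
  set g₁ : ℝ → ℂ := hgi.aestronglyMeasurable.mk g with hg₁def
  have hg₁sm : StronglyMeasurable g₁ := hgi.aestronglyMeasurable.stronglyMeasurable_mk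
  have hgg₁ : g =ᵐ[volume.restrict (Set.Ioc sstar Λ)] g₁ :=
    hgi.aestronglyMeasurable.ae_eq_mk
  have hg₁i : IntegrableOn g₁ (Set.Ioc sstar Λ) := hgi.congr_fun_ae hgg₁
  -- interval integrals of g and g₁ agree on subintervals
  have hFF : ∀ s ∈ Set.Icc sstar Λ, (∫ u in sstar..s, g u) = ∫ u in sstar..s, g₁ u := by
    intro s hs
    rw [intervalIntegral.integral_of_le hs.1, intervalIntegral.integral_of_le hs.1]
    apply integral_congr_ae
    exact ae_restrict_of_ae_restrict_of_subset (Set.Ioc_subset_Ioc_right hs.2) hgg₁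
  -- split the integral
  have hf1 : IntervalIntegrable (fun s => f s * E s) volume 0 sstar := by
    apply IntervalIntegrable.mul_continuousOn _ hEcont.continuousOn
    apply hfint.mono_set
    rw [Set.uIcc_of_le (le_of_lt hsstar0), Set.uIcc_of_le (le_of_lt (hsstar0.trans_le hsstarΛ))]
    exact Set.Icc_subset_Icc_right hsstarΛ
  have hf2 : IntervalIntegrable (fun s => f s * E s) volume sstar Λ := by
    apply IntervalIntegrable.mul_continuousOn _ hEcont.continuousOn
    apply hfint.mono_set
    rw [Set.uIcc_of_le hsstarΛ, Set.uIcc_of_le (le_of_lt (hsstar0.trans_le hsstarΛ))]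
    exact Set.Icc_subset_Icc_left (le_of_lt hsstar0)
  have hsplit : (∫ s in (0:ℝ)..Λ, f s * E s) = ∫ s in sstar..Λ, f s * E s := by
    rw [← intervalIntegral.integral_add_adjacent_intervals hf1 hf2]
    have h0 : (∫ s in (0:ℝ)..sstar, f s * E s) = 0 := by
      rw [intervalIntegral.integral_congr (g := fun _ => (0:ℂ))]
      · simp
      · intro s hs
        rw [Set.uIcc_of_le (le_of_lt hsstar0)] at hs
        simp [hf0 s hs]
    rw [h0, zero_add]
  -- rewrite as integral over Ioc with g₁ antiderivative
  have hmain : (∫ s in sstar..Λ, f s * E s)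
      = ∫ u in Set.Ioc sstar Λ, g₁ u * ((E Λ - E u) / (Complex.I * w)) := by
    rw [intervalIntegral.integral_of_le hsstarΛ]
    have step1 : (∫ s in Set.Ioc sstar Λ, f s * E s)
        = ∫ s in Set.Ioc sstar Λ, (∫ u in sstar..s, g₁ u) * E s := by
      apply setIntegral_congr_fun measurableSet_Ioc
      intro s hs
      have hs' : s ∈ Set.Icc sstar Λ := Set.Ioc_subset_Icc_self hs
      show f s * E s = (∫ u in sstar..s, g₁ u) * E s
      rw [hfg s hs', hFF s hs']
    rw [step1, fubini_ibp sstar Λ hsstarΛ w (by rw [hwim]; exact le_of_lt hη) g₁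
      hg₁sm.measurable hg₁i]
    apply setIntegral_congr_fun measurableSet_Ioc
    intro u hu
    show g₁ u * (∫ s in u..Λ, Complex.exp (Complex.I * w * s))
        = g₁ u * ((E Λ - E u) / (Complex.I * w))
    rw [integral_exp_mul_complex hiw]
  -- integrability of g₁ * E on Ioc
  have hg₁E : IntegrableOn (fun u => g₁ u * E u) (Set.Ioc sstar Λ) := by
    have : IntervalIntegrable g₁ volume sstar Λ := by
      rw [intervalIntegrable_iff_integrableOn_Ioc_of_le hsstarΛ]
      exact hg₁i
    exact (this.mul_continuousOn hEcont.continuousOn).1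
  -- compute -I w * integral
  have hfinal : -Complex.I * w * (∫ s in (0:ℝ)..Λ, f s * E s)
      = (∫ u in Set.Ioc sstar Λ, g₁ u * E u) - (∫ u in Set.Ioc sstar Λ, g₁ u) * E Λ := by
    rw [hsplit, hmain, ← integral_const_mul, ← integral_mul_const, ← integral_sub hg₁E
      (hg₁i.mul_const _)]
    apply setIntegral_congr_fun measurableSet_Ioc
    intro u _
    have hw0 : w ≠ 0 := right_ne_zero_of_mul hiw
    field_simp
    ring
  rw [hfinal]
  -- bounds
  have habs1 : ‖∫ u in Set.Ioc sstar Λ, g₁ u * E u‖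
      ≤ Real.exp (-η * sstar) * ∫ s in sstar..Λ, ‖g s‖ := by
    calc ‖∫ u in Set.Ioc sstar Λ, g₁ u * E u‖
        ≤ ∫ u in Set.Ioc sstar Λ, ‖g₁ u * E u‖ := norm_integral_le_integral_norm _
      _ ≤ ∫ u in Set.Ioc sstar Λ, Real.exp (-η * sstar) * ‖g₁ u‖ := by
          apply setIntegral_mono_on hg₁E.norm (hg₁i.norm.const_mul _) measurableSet_Ioc
          intro u hu
          rw [norm_mul, hEnorm, mul_comm]
          apply mul_le_mul_of_nonneg_right _ (norm_nonneg _)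
          apply Real.exp_le_exp.mpr
          nlinarith [hu.1]
      _ = Real.exp (-η * sstar) * ∫ u in Set.Ioc sstar Λ, ‖g₁ u‖ := integral_const_mul _ _
      _ = Real.exp (-η * sstar) * ∫ s in sstar..Λ, ‖g s‖ := by
          congr 1
          rw [intervalIntegral.integral_of_le hsstarΛ]
          apply integral_congr_ae
          filter_upwards [hgg₁] with u hu
          rw [← hu]
  have habs2 : ‖(∫ u in Set.Ioc sstar Λ, g₁ u) * E Λ‖
      ≤ Real.exp (-η * sstar) * ‖f Λ‖ := by
    rw [norm_mul]
    have hfΛ : (∫ u in Set.Ioc sstar Λ, g₁ u) = f Λ := by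
      rw [hfg Λ ⟨hsstarΛ, le_refl Λ⟩, hFF Λ ⟨hsstarΛ, le_refl Λ⟩,
        intervalIntegral.integral_of_le hsstarΛ]
    rw [hfΛ, mul_comm]
    apply mul_le_mul_of_nonneg_right _ (norm_nonneg _)
    rw [hEnorm]
    apply Real.exp_le_exp.mpr
    nlinarith
  calc ‖(∫ u in Set.Ioc sstar Λ, g₁ u * E u) - (∫ u in Set.Ioc sstar Λ, g₁ u) * E Λ‖
      ≤ ‖∫ u in Set.Ioc sstar Λ, g₁ u * E u‖
        + ‖(∫ u in Set.Ioc sstar Λ, g₁ u) * E Λ‖ := by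
        apply norm_sub_le
    _ ≤ Real.exp (-η * sstar) * (∫ s in sstar..Λ, ‖g s‖)
        + Real.exp (-η * sstar) * ‖f Λ‖ := add_le_add habs1 habs2
    _ = Real.exp (-η * sstar) * (‖f Λ‖ + ∫ s in sstar..Λ, ‖g s‖) := by
        ring
end Helpers

/-- The least singular value (on the domain dimension) of a rectangular complex
matrix: `σ_min(T) = inf_{‖θ‖₂ = 1} ‖T θ‖₂`. -/
noncomputable def sigmaMin {m n : ℕ} (L : Matrix (Fin m) (Fin n) ℂ) : ℝ :=
  ⨅ x : {x : EuclideanSpace ℂ (Fin n) // ‖x‖ = 1}, ‖Matrix.toEuclideanLin L x.1‖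

theorem stmt17 (Λ η : ℝ) (hΛ : 0 < Λ) (hη : 0 < η)
    (M N : ℕ) (hN : 1 ≤ N) (hMN : N ≤ M)
    (x : Fin M → ℝ) (z : Fin M → ℂ)
    (hz : ∀ k, z k = ((x k : ℝ) : ℂ) + (η : ℂ) * Complex.I)
    (φ : Fin N → ℝ → ℂ)
    (hφint : ∀ j, IntervalIntegrable (φ j) volume 0 Λ)
    (φhat : Fin N → ℂ → ℂ)
    (hφhat : ∀ j w, φhat j w = ∫ s in (0:ℝ)..Λ, φ j s * Complex.exp (Complex.I * w * (s : ℂ)))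
    (T : Matrix (Fin M) (Fin N) ℂ)
    (hT : ∀ k j, T k j = -Complex.I * z k * φhat j (z k))
    (jstar : Fin N) (sstar : ℝ) (hsstar0 : 0 < sstar) (hsstarΛ : sstar ≤ Λ)
    (g : ℝ → ℂ) (hg : IntervalIntegrable g volume sstar Λ)
    (hφ0 : ∀ s ∈ Set.Icc (0 : ℝ) sstar, φ jstar s = 0)
    (hφg : ∀ s ∈ Set.Icc sstar Λ, φ jstar s = ∫ u in sstar..s, g u) :
    sigmaMin T ≤ Real.sqrt M * Real.exp (-η * sstar) *
      (‖φ jstar sstar‖ + ‖φ jstar Λ‖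
        + ∫ s in sstar..Λ, ‖g s‖) := by
  set C : ℝ := Real.exp (-η * sstar) * (‖φ jstar sstar‖ + ‖φ jstar Λ‖
    + ∫ s in sstar..Λ, ‖g s‖) with hC
  have hgint : (0:ℝ) ≤ ∫ s in sstar..Λ, ‖g s‖ :=
    intervalIntegral.integral_nonneg hsstarΛ (fun u _ => norm_nonneg _)
  have hC0 : 0 ≤ C := by
    apply mul_nonneg (Real.exp_nonneg _)
    have := norm_nonneg (φ jstar sstar)
    have := norm_nonneg (φ jstar Λ)
    linarith
  -- entry bound
  have hentry : ∀ k, ‖T k jstar‖ ≤ C := by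
    intro k
    have him : (z k).im = η := by rw [hz k]; simp
    rw [hT, hφhat]
    refine le_trans (entry_bound Λ η sstar hη hsstar0 hsstarΛ (z k) him (φ jstar)
      (hφint jstar) g hg hφ0 hφg) ?_
    rw [hC]
    have := norm_nonneg (φ jstar sstar)
    nlinarith [Real.exp_nonneg (-η * sstar)]
  -- test vector
  set θ : EuclideanSpace ℂ (Fin N) := EuclideanSpace.single jstar (1:ℂ) with hθdef
  have hθ : ‖θ‖ = 1 := by simp [hθdef, EuclideanSpace.norm_single]
  have hbdd : BddBelow (Set.range fun y : {y : EuclideanSpace ℂ (Fin N) // ‖y‖ = 1} =>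
      ‖Matrix.toEuclideanLin T y.1‖) := by
    refine ⟨0, ?_⟩
    rintro r ⟨y, rfl⟩
    exact norm_nonneg _
  have h1 : sigmaMin T ≤ ‖Matrix.toEuclideanLin T θ‖ := ciInf_le hbdd ⟨θ, hθ⟩
  have hv : ∀ k, (Matrix.toEuclideanLin T θ) k = T k jstar := by
    intro k
    show (T *ᵥ (WithLp.equiv 2 (Fin N → ℂ)) θ) k = T k jstar
    have hθeq : (WithLp.equiv 2 (Fin N → ℂ)) θ = Pi.single jstar (1:ℂ) := by
      rw [hθdef]
      rfl
    rw [hθeq, Matrix.mulVec_single]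
    exact mul_one _
  have h2 : ‖Matrix.toEuclideanLin T θ‖ ≤ Real.sqrt M * C := by
    rw [EuclideanSpace.norm_eq]
    calc Real.sqrt (∑ k, ‖(Matrix.toEuclideanLin T θ) k‖ ^ 2)
        ≤ Real.sqrt (∑ _k : Fin M, C ^ 2) := by
          apply Real.sqrt_le_sqrt
          apply Finset.sum_le_sum
          intro k _
          have : ‖(Matrix.toEuclideanLin T θ) k‖ ≤ C := by
            rw [hv k]
            exact hentry k
          nlinarith [norm_nonneg ((Matrix.toEuclideanLin T θ) k)]
      _ = Real.sqrt ((M : ℝ) * C ^ 2) := by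
          rw [Finset.sum_const, Finset.card_univ, Fintype.card_fin, nsmul_eq_mul]
      _ = Real.sqrt M * C := by
          rw [Real.sqrt_mul (Nat.cast_nonneg M), Real.sqrt_sq hC0]
  calc sigmaMin T ≤ ‖Matrix.toEuclideanLin T θ‖ := h1
    _ ≤ Real.sqrt M * C := h2
    _ = _ := by rw [hC]; ring
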